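/- Let S, T be antichains in F = F_{2k}^{[1,n]} with T ≺_p S, and let i, ℓ ≥ 1. Then T([i, i+2ℓ-1]) ≺_p S([i+1, i+2ℓ]). -/

import Mathlib

/-- `F ≤_p G`: componentwise comparison of the increasing enumerations. -/
def lep (F G : Finset ℕ) : Prop :=
  F.card = G.card ∧ ∀ ℓ, (F.sort (· ≤ ·)).getD ℓ 0 ≤ (G.sort (· ≤ ·)).getD ℓ 0

/-- `F ≺_p G`: `F ≤_p G - 1` componentwise on increasing enumerations. -/
def prep (F G : Finset ℕ) : Prop :=
  F.card = G.card ∧ ∀ ℓ < F.card,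
    (F.sort (· ≤ ·)).getD ℓ 0 + 1 ≤ (G.sort (· ≤ ·)).getD ℓ 0

/-- The poset `F_{2k}^{[1,n]}`: `2k`-subsets of `[n]` that are disjoint unions
of `k` adjacent pairs `{y_j, y_j + 1}` with gaps `≥ 2`. -/
def FF (k n : ℕ) : Set (Finset ℕ) :=
  {F | ∃ y : ℕ → ℕ, (1 ≤ y 1) ∧ (∀ j, 1 ≤ j → j ≤ k → y j + 1 ≤ n) ∧
    (∀ j, 1 ≤ j → j < k → y j + 2 ≤ y (j + 1)) ∧
    F = (Finset.Icc 1 k).biUnion (fun j => {y j, y j + 1})}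

/-- The order ideal of `F_{2k}^{[1,n]}` generated by `S`. -/
def idealOf (k n : ℕ) (S : Set (Finset ℕ)) : Set (Finset ℕ) :=
  {G | G ∈ FF k n ∧ ∃ F ∈ S, lep G F}

/-- `S` is an antichain in `F_{2k}^{[1,n]}`. -/
def IsAC (k n : ℕ) (S : Set (Finset ℕ)) : Prop :=
  S ⊆ FF k n ∧ ∀ F ∈ S, ∀ G ∈ S, lep F G → F = G

/-- The candidates defining `S(J)` for the interval `J = [j, j+2l-1]`:
sets `H ⊆ [j+2l, n]` with `J ∪ H ∈ F(S)`. -/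
def SJcand (k n : ℕ) (S : Set (Finset ℕ)) (j l : ℕ) : Set (Finset ℕ) :=
  {H | (∀ a ∈ H, j + 2 * l ≤ a ∧ a ≤ n) ∧
    (Finset.Icc j (j + 2 * l - 1) ∪ H) ∈ idealOf k n S}

/-- `S(J)`, `J = [j, j+2l-1]`: the maximal elements of `SJcand`. -/
def SJ (k n : ℕ) (S : Set (Finset ℕ)) (j l : ℕ) : Set (Finset ℕ) :=
  {H | H ∈ SJcand k n S j l ∧ ∀ H' ∈ SJcand k n S j l, lep H H' → H = H'}

/-- `T ≤_p S` for antichains: every element of `T` is `≤_p` some element of `S`. -/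
def ACle (T S : Set (Finset ℕ)) : Prop := ∀ G ∈ T, ∃ F ∈ S, lep G F

/-- `T ≺_p S` for antichains: every element of `T` is `≺_p` some element of `S`. -/
def ACprec (T S : Set (Finset ℕ)) : Prop := ∀ G ∈ T, ∃ F ∈ S, prep G F

/-- `S - 1`: subtract the all-ones vector from each element of `S` with
minimum `> 1`. -/
def sub1 (S : Set (Finset ℕ)) : Set (Finset ℕ) :=
  {G | ∃ F ∈ S, (∀ a ∈ F, 2 ≤ a) ∧ G = F.image (fun a => a - 1)}

/-- The facets of `B(S, i)`: elements of the order ideal `F(S)` whose minimum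
is at least `i`. -/
def Bfacets (k n : ℕ) (S : Set (Finset ℕ)) (i : ℕ) : Set (Finset ℕ) :=
  {G | G ∈ idealOf k n S ∧ ∀ a ∈ G, i ≤ a}


section Aux

lemma listSum_eq (L : List ℕ) :
    L.sum = ∑ ℓ ∈ Finset.range L.length, L.getD ℓ 0 := by
  induction L with
  | nil => simp
  | cons a t ih =>
    rw [List.sum_cons, List.length_cons, Finset.sum_range_succ', ih]
    simp [Nat.add_comm]

lemma list_eq_of_getD {L M : List ℕ} (hlen : L.length = M.length)
    (h : ∀ ℓ, L.getD ℓ 0 = M.getD ℓ 0) : L = M := by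
  apply List.ext_getElem hlen
  intro i h1 h2
  have := h i
  rwa [List.getD_eq_getElem L 0 h1, List.getD_eq_getElem M 0 h2] at this

lemma sort_length (F : Finset ℕ) : (F.sort (· ≤ ·)).length = F.card :=
  Finset.length_sort _

lemma sort_getD_mem (F : Finset ℕ) {ℓ : ℕ} (h : ℓ < F.card) :
    (F.sort (· ≤ ·)).getD ℓ 0 ∈ F := by
  rw [← sort_length F] at h
  rw [List.getD_eq_getElem _ 0 h]
  exact (Finset.mem_sort _).mp (List.getElem_mem h)

lemma mem_exists_sort_getD (F : Finset ℕ) {b : ℕ} (hb : b ∈ F) :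
    ∃ ℓ < F.card, (F.sort (· ≤ ·)).getD ℓ 0 = b := by
  have : b ∈ F.sort (· ≤ ·) := (Finset.mem_sort _).mpr hb
  obtain ⟨ℓ, hℓ, he⟩ := List.mem_iff_getElem.mp this
  refine ⟨ℓ, by rwa [sort_length F] at hℓ, ?_⟩
  rw [List.getD_eq_getElem _ 0 hℓ, he]

lemma sort_image_add_one (F : Finset ℕ) :
    ((F.image (· + 1)).sort (· ≤ ·)) = (F.sort (· ≤ ·)).map (· + 1) := by
  refine (fun hp h1 h2 => List.Perm.eq_of_pairwise' (r := (· ≤ · : ℕ → ℕ → Prop)) h1 h2 hp) ?_ ?_ ?_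
  · apply Multiset.coe_eq_coe.mp
    have h1 : ((F.image (· + 1)).sort (· ≤ ·) : Multiset ℕ) = (F.image (· + 1)).val :=
      Finset.sort_eq _ _
    have h2 : (F.image (· + 1)).val = Multiset.map (· + 1) F.val :=
      Finset.image_val_of_injOn ((add_left_injective 1).injOn)
    rw [h1, h2, ← Finset.sort_eq F (· ≤ ·), Multiset.map_coe]
  · exact Finset.pairwise_sort _ _
  · exact List.Pairwise.map _ (fun a b h => by simpa using h) (Finset.pairwise_sort F (· ≤ ·))

lemma sort_image_getD (F : Finset ℕ) {ℓ : ℕ} (h : ℓ < F.card) :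
    ((F.image (· + 1)).sort (· ≤ ·)).getD ℓ 0 = (F.sort (· ≤ ·)).getD ℓ 0 + 1 := by
  rw [sort_image_add_one]
  rw [← sort_length F] at h
  rw [List.getD_eq_getElem _ 0 (by simpa using h), List.getD_eq_getElem _ 0 h,
    List.getElem_map]

lemma card_image_add_one (F : Finset ℕ) : (F.image (· + 1)).card = F.card :=
  Finset.card_image_of_injective _ (add_left_injective 1)

lemma lep_refl (F : Finset ℕ) : lep F F := ⟨rfl, fun _ => le_refl _⟩

lemma lep_trans {F G H : Finset ℕ} (h1 : lep F G) (h2 : lep G H) : lep F H :=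
  ⟨h1.1.trans h2.1, fun ℓ => (h1.2 ℓ).trans (h2.2 ℓ)⟩

lemma lep_prep_trans {F G H : Finset ℕ} (h1 : lep F G) (h2 : prep G H) : prep F H :=
  ⟨h1.1.trans h2.1, fun ℓ hℓ => by
    have hc := h1.1
    have := h1.2 ℓ
    have := h2.2 ℓ (by omega)
    omega⟩

lemma lep_sum_le {F G : Finset ℕ} (h : lep F G) :
    (F.sort (· ≤ ·)).sum ≤ (G.sort (· ≤ ·)).sum := by
  rw [listSum_eq, listSum_eq, sort_length, sort_length, h.1]
  exact Finset.sum_le_sum fun ℓ _ => h.2 ℓ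

lemma lep_eq_of_sum_eq {F G : Finset ℕ} (h : lep F G)
    (hs : (F.sort (· ≤ ·)).sum = (G.sort (· ≤ ·)).sum) : F = G := by
  rw [listSum_eq, listSum_eq, sort_length, sort_length, h.1] at hs
  have hpt := (Finset.sum_eq_sum_iff_of_le (fun ℓ _ => h.2 ℓ)).mp hs
  have hc := h.1
  have hlists : F.sort (· ≤ ·) = G.sort (· ≤ ·) := by
    apply list_eq_of_getD (by rw [sort_length, sort_length, h.1])
    intro ℓ
    by_cases hℓ : ℓ < G.card
    · exact hpt ℓ (Finset.mem_range.mpr hℓ)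
    · rw [List.getD_eq_default _ _ (by rw [sort_length]; omega),
        List.getD_eq_default _ _ (by rw [sort_length]; omega)]
  have := congrArg List.toFinset hlists
  rwa [Finset.sort_toFinset, Finset.sort_toFinset] at this

/-- Elements of `FF k n` are at most `n`. -/
lemma FF_le_n {k n : ℕ} {F : Finset ℕ} (hF : F ∈ FF k n) : ∀ a ∈ F, a ≤ n := by
  obtain ⟨y, hy1, hyn, hgap, rfl⟩ := hF
  intro a ha
  obtain ⟨j, hj, hja⟩ := Finset.mem_biUnion.mp ha
  obtain ⟨hj1, hjk⟩ := Finset.mem_Icc.mp hj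
  have := hyn j hj1 hjk
  rcases Finset.mem_insert.mp hja with h | h
  · omega
  · rw [Finset.mem_singleton] at h; omega

/-- Existence of a maximal element of `SJcand` above a given one. -/
lemma exists_SJ_ge (k n j l : ℕ) (S : Set (Finset ℕ)) {H0 : Finset ℕ}
    (h : H0 ∈ SJcand k n S j l) :
    ∃ H' ∈ SJ k n S j l, lep H0 H' := by
  set C : Set (Finset ℕ) := {H' | H' ∈ SJcand k n S j l ∧ lep H0 H'} with hC
  have hCfin : C.Finite := by
    apply Set.Finite.subset ((Finset.range (n + 1)).powerset.finite_toSet)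
    intro H' hH'
    rw [Finset.mem_coe, Finset.mem_powerset]
    intro a ha
    exact Finset.mem_range.mpr (Nat.lt_succ_of_le ((hH'.1.1 a ha).2))
  have hCne : C.Nonempty := ⟨H0, h, lep_refl H0⟩
  obtain ⟨H', hH'C, hmax⟩ :=
    Set.Finite.exists_maximalFor (fun H' => (H'.sort (· ≤ ·)).sum) C hCfin hCne
  refine ⟨H', ⟨hH'C.1, ?_⟩, hH'C.2⟩
  intro H'' hc'' hle''
  have hmem : H'' ∈ C := ⟨hc'', lep_trans hH'C.2 hle''⟩
  have hsum := le_antisymm (lep_sum_le hle'') (hmax hmem (lep_sum_le hle''))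
  exact lep_eq_of_sum_eq hle'' hsum

end Aux

/-- If `T ≺_p S` then `T([i, i+2l-1]) ≺_p S([i+1, i+2l])`. -/
theorem SJ_prec (k n i l : ℕ) (hk : 1 ≤ k) (hi : 1 ≤ i) (hl : 1 ≤ l) (hlk : l ≤ k)
    (S T : Set (Finset ℕ)) (hS : IsAC k n S) (hT : IsAC k n T)
    (hTS : ACprec T S) :
    ACprec (SJ k n T i l) (SJ k n S (i + 1) l) := by
  intro H hH
  obtain ⟨⟨haH, hFmem⟩, _hmaxT⟩ := hH
  set J : Finset ℕ := Finset.Icc i (i + 2 * l - 1) with hJdef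
  obtain ⟨hFF0, F, hFT, hlep⟩ := hFmem
  obtain ⟨F', hF'S, hprepFF'⟩ := hTS F hFT
  set F0 : Finset ℕ := J ∪ H with hF0def
  have hprep0 : prep F0 F' := lep_prep_trans hlep hprepFF'
  -- every element of F0, plus 1, is at most n
  have hub : ∀ b ∈ F0, b + 1 ≤ n := by
    intro b hb
    obtain ⟨ℓ, hℓ, he⟩ := mem_exists_sort_getD F0 hb
    have h1 := hprep0.2 ℓ hℓ
    have h2 : (F'.sort (· ≤ ·)).getD ℓ 0 ∈ F' := sort_getD_mem F' (hprep0.1 ▸ hℓ)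
    have h3 := FF_le_n (hS.1 hF'S) _ h2
    omega
  -- the shifted set is in FF k n
  have hFFshift : F0.image (· + 1) ∈ FF k n := by
    obtain ⟨y, hy1, hyn, hgap, hFeq⟩ := hFF0
    refine ⟨fun j => y j + 1, by show 1 ≤ y 1 + 1; omega, ?_,
      fun j hj1 hjk => by
        have := hgap j hj1 hjk; show y j + 1 + 2 ≤ y (j + 1) + 1; omega, ?_⟩
    · intro j hj1 hjk
      have : y j + 1 ∈ F0 := by
        rw [hFeq]
        exact Finset.mem_biUnion.mpr ⟨j, Finset.mem_Icc.mpr ⟨hj1, hjk⟩,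
          Finset.mem_insert.mpr (Or.inr (Finset.mem_singleton.mpr rfl))⟩
      have := hub _ this
      show y j + 1 + 1 ≤ n
      omega
    · rw [hFeq, Finset.biUnion_image]
      congr 1
      ext j a
      simp only [Finset.image_insert, Finset.image_singleton, Finset.mem_insert,
        Finset.mem_singleton]
  -- the shifted set is ≤_p F'
  have hcard0 : (F0.image (· + 1)).card = F'.card := by
    rw [card_image_add_one]; exact hprep0.1
  have hlepshift : lep (F0.image (· + 1)) F' := by
    refine ⟨hcard0, fun ℓ => ?_⟩
    by_cases hℓ : ℓ < F0.card
    · rw [sort_image_getD F0 hℓ]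
      exact hprep0.2 ℓ hℓ
    · rw [List.getD_eq_default _ _ (by rw [sort_length, card_image_add_one]; omega)]
      exact Nat.zero_le _
  -- the shift of J ∪ H splits as J' ∪ (H + 1)
  have hJsplit : F0.image (· + 1)
      = Finset.Icc (i + 1) (i + 1 + 2 * l - 1) ∪ H.image (· + 1) := by
    rw [hF0def, Finset.image_union, hJdef, Finset.image_add_right_Icc]
    congr 2
    omega
  -- H + 1 is a candidate for S(J')
  have hcand : H.image (· + 1) ∈ SJcand k n S (i + 1) l := by
    constructor
    · intro a ha
      obtain ⟨b, hb, rfl⟩ := Finset.mem_image.mp ha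
      have h1 := haH b hb
      have h2 := hub b (Finset.mem_union_right _ hb)
      constructor <;> omega
    · rw [← hJsplit]
      exact ⟨hFFshift, F', hF'S, hlepshift⟩
  obtain ⟨H', hH'SJ, hlepH'⟩ := exists_SJ_ge k n (i + 1) l S hcand
  refine ⟨H', hH'SJ, ?_⟩
  constructor
  · rw [← card_image_add_one H]; exact hlepH'.1
  · intro ℓ hℓ
    have := hlepH'.2 ℓ
    rwa [sort_image_getD H hℓ] at this
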